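/- Define the three-dimensional vector field G = (G₁, G₂, G₃) on ℝ³ by G₁(H,σ,Φ) := (−24πΦ² − (9/8)(σ² + H²) − (3/4)σH − (1/3)(1 − H²))·(1 − H²), G₂(H,σ,Φ) := (24πΦ² + (9/8)σ² − (9/4)Hσ − (1/3)(1 − H²) − (15/8)H²) + Hσ·(24πΦ² + (9/8)(σ² + H²) + (3/4)Hσ + (1/3)(1 − H²)), G₃(H,σ,Φ) := (24πΦ² + (9/8)(σ² + H²) + (3/4)Hσ + (1/3)(1 − H²))·HΦ − 3HΦ, and let f₁(s) := (1/(8√π))·√(−3s² − 2s + 5) for −5/3 ≤ s ≤ 1. Then for every s ∈ [−5/3, 1] the points (1, s, f₁(s)) and (1, s, −f₁(s)) are equilibrium points of G, i.e. G(1, s, ±f₁(s)) = (0, 0, 0). -/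

import Mathlib

open Real

/-- First component of the compactified scalar-field vector field. -/
noncomputable def G₁ (H σ Φ : ℝ) : ℝ :=
  (-24 * π * Φ ^ 2 - (9 / 8) * (σ ^ 2 + H ^ 2) - (3 / 4) * (σ * H)
      - (1 / 3) * (1 - H ^ 2)) * (1 - H ^ 2)

/-- Second component of the compactified scalar-field vector field. -/
noncomputable def G₂ (H σ Φ : ℝ) : ℝ :=
  (24 * π * Φ ^ 2 + (9 / 8) * σ ^ 2 - (9 / 4) * (H * σ) - (1 / 3) * (1 - H ^ 2)
      - (15 / 8) * H ^ 2)
    + H * σ * (24 * π * Φ ^ 2 + (9 / 8) * (σ ^ 2 + H ^ 2) + (3 / 4) * (H * σ)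
      + (1 / 3) * (1 - H ^ 2))

/-- Third component of the compactified scalar-field vector field. -/
noncomputable def G₃ (H σ Φ : ℝ) : ℝ :=
  (24 * π * Φ ^ 2 + (9 / 8) * (σ ^ 2 + H ^ 2) + (3 / 4) * (H * σ)
      + (1 / 3) * (1 - H ^ 2)) * (H * Φ) - 3 * (H * Φ)

/-- The profile `f₁` of the fixed-point curves at the future boundary. -/
noncomputable def f₁ (s : ℝ) : ℝ :=
  (1 / (8 * Real.sqrt π)) * Real.sqrt (-3 * s ^ 2 - 2 * s + 5)

lemma key (s : ℝ) (h1 : -(5/3) ≤ s) (h2 : s ≤ 1) :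
    24 * π * (f₁ s) ^ 2 = (3/8) * (-3 * s ^ 2 - 2 * s + 5) := by
  have hrad : (0:ℝ) ≤ -3 * s ^ 2 - 2 * s + 5 := by nlinarith
  have hπ : (0:ℝ) < π := Real.pi_pos
  have hsπ : Real.sqrt π ^ 2 = π := Real.sq_sqrt hπ.le
  have hs : Real.sqrt (-3 * s ^ 2 - 2 * s + 5) ^ 2 = -3 * s ^ 2 - 2 * s + 5 :=
    Real.sq_sqrt hrad
  have hne : Real.sqrt π ≠ 0 := by positivity
  unfold f₁
  have hs' : Real.sqrt (-(3 * s ^ 2) - 2 * s + 5) ^ 2 = -3 * s ^ 2 - 2 * s + 5 := by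
    rw [show (-(3 * s ^ 2) - 2 * s + 5 : ℝ) = -3 * s ^ 2 - 2 * s + 5 by ring]; exact hs
  field_simp
  have hs'' : Real.sqrt (s * (-(3 * s) - 2) + 5) ^ 2 = -3 * s ^ 2 - 2 * s + 5 := by
    rw [show (s * (-(3 * s) - 2) + 5 : ℝ) = -3 * s ^ 2 - 2 * s + 5 by ring]; exact hs
  linear_combination (24*π)*hs'' - (24*(-3 * s ^ 2 - 2 * s + 5))*hsπ

/-- For every `s ∈ [−5/3, 1]`, the points `(1, s, ±f₁(s))` are equilibrium points of the
compactified Einstein–scalar-field vector field `G = (G₁, G₂, G₃)`. -/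
theorem fixed_point_curves_future_boundary :
    ∀ s ∈ Set.Icc (-(5 / 3) : ℝ) 1,
      (G₁ 1 s (f₁ s) = 0 ∧ G₂ 1 s (f₁ s) = 0 ∧ G₃ 1 s (f₁ s) = 0) ∧
      (G₁ 1 s (-f₁ s) = 0 ∧ G₂ 1 s (-f₁ s) = 0 ∧ G₃ 1 s (-f₁ s) = 0) := by
  rintro s ⟨h1, h2⟩
  have hk := key s h1 h2
  have hk' : 24 * π * (-(f₁ s)) ^ 2 = (3/8) * (-3 * s ^ 2 - 2 * s + 5) := by
    rw [neg_pow]; simpa using hk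
  unfold G₁ G₂ G₃
  refine ⟨⟨by ring, ?_, ?_⟩, ⟨by ring, ?_, ?_⟩⟩
  · linear_combination (1 + s) * hk
  · linear_combination (f₁ s) * hk
  · linear_combination (1 + s) * hk'
  · linear_combination (-f₁ s) * hk'
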